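/- Let F be a differential field with constants K. If M ∈ F^{n×n} has rank one, satisfies M M' = M' M, and is not nilpotent, then M is F-diagonalizable and hence of Type 1. -/

import Mathlib

set_option maxHeartbeats 1000000

def IsDeriv {F : Type*} [Field F] (d : F → F) : Prop :=
  (∀ a b, d (a + b) = d a + d b) ∧ (∀ a b, d (a * b) = d a * b + a * d b)

/-- `M` is of Type 1: an `F`-linear combination of pairwise commuting matrices
with constant entries. -/
def IsType1 {F : Type*} [Field F] (d : F → F) {n : ℕ}
    (M : Matrix (Fin n) (Fin n) F) : Prop :=
  ∃ (k : ℕ) (f : Fin k → F) (C : Fin k → Matrix (Fin n) (Fin n) F),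
    (∀ j p q, d (C j p q) = 0) ∧
    (∀ i j, C i * C j = C j * C i) ∧
    M = ∑ j, f j • C j

section Aux

variable {F : Type*} [Field F] {n : ℕ}

/-- A rank-one matrix satisfies `M * M = c • M` for some `c`. -/
theorem aux_sq_smul (M : Matrix (Fin n) (Fin n) F) (hrank : M.rank = 1) :
    ∃ c : F, M * M = c • M := by
  classical
  set f := M.mulVecLin with hf
  have hr : Module.finrank F (LinearMap.range f) = 1 := hrank
  obtain ⟨u, hu0, hu⟩ := finrank_eq_one_iff'.mp hr
  obtain ⟨c, hc⟩ := hu ⟨f (u : Fin n → F), LinearMap.mem_range_self f (u : Fin n → F)⟩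
  have hfu : f (u : Fin n → F) = c • (u : Fin n → F) := by
    have := congrArg (Subtype.val) hc
    simpa using this.symm
  have hkey : ∀ x, f (f x) = c • f x := by
    intro x
    obtain ⟨a, ha⟩ := hu ⟨f x, LinearMap.mem_range_self f x⟩
    have hfx : f x = a • (u : Fin n → F) := by
      have := congrArg (Subtype.val) ha
      simpa using this.symm
    rw [hfx, map_smul, hfu, smul_comm]
  refine ⟨c, ?_⟩
  have h : Matrix.toLin' (M * M) = Matrix.toLin' (c • M) := by
    rw [Matrix.toLin'_mul, map_smul]
    refine LinearMap.ext fun x => ?_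
    simp only [Matrix.toLin'_apply', LinearMap.comp_apply, LinearMap.smul_apply]
    exact hkey x
  exact Matrix.toLin'.injective h

end Aux

/-- A rank-one non-nilpotent matrix commuting with its derivative is
`F`-diagonalizable and hence of Type 1. -/
theorem rank_one_not_nilpotent_type1 {F : Type*} [Field F]
    (d : F → F) (hd : IsDeriv d)
    {n : ℕ} (M : Matrix (Fin n) (Fin n) F)
    (hrank : M.rank = 1)
    (hcomm : M * M.map d = M.map d * M)
    (hnil : ¬ IsNilpotent M) :
    (∃ S : Matrix (Fin n) (Fin n) F, IsUnit S ∧ (S⁻¹ * M * S).IsDiag) ∧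
      IsType1 d M := by
  classical
  obtain ⟨c, hMM⟩ := aux_sq_smul M hrank
  have hc : c ≠ 0 := by
    rintro rfl
    exact hnil ⟨2, by rw [pow_two, hMM, zero_smul]⟩
  -- basic derivative facts
  have hd1 : d 1 = 0 := by
    have h2 : d (1 : F) = d 1 + d 1 := by simpa using hd.2 1 1
    exact (left_eq_add.mp h2)
  set dh : F →+ F := AddMonoidHom.mk' d hd.1 with hdh
  have hmapmul : ∀ X Y : Matrix (Fin n) (Fin n) F,
      (X * Y).map d = X.map d * Y + X * Y.map d := by
    intro X Y
    ext i j
    simp only [Matrix.map_apply, Matrix.mul_apply, Matrix.add_apply]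
    rw [show d (∑ k, X i k * Y k j) = dh (∑ k, X i k * Y k j) from rfl, map_sum,
      ← Finset.sum_add_distrib]
    exact Finset.sum_congr rfl fun k _ => hd.2 _ _
  have hmapsmul : ∀ (a : F) (X : Matrix (Fin n) (Fin n) F),
      (a • X).map d = d a • X + a • X.map d := by
    intro a X
    ext i j
    simp only [Matrix.map_apply, Matrix.smul_apply, Matrix.add_apply, smul_eq_mul]
    exact hd.2 a (X i j)
  set Dm := M.map d with hDm
  -- differentiate M*M = c • M
  have step1 : Dm * M + M * Dm = d c • M + c • Dm := by
    have := congrArg (fun X : Matrix (Fin n) (Fin n) F => X.map d) hMM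
    simpa [hmapmul, hmapsmul] using this
  have step2 : M * Dm + M * Dm = d c • M + c • Dm := by
    rwa [← hcomm] at step1
  have step3 : M * Dm = d c • M := by
    have e3 := congrArg (fun X => M * X) step2
    simp only [Matrix.mul_add, Matrix.mul_smul] at e3
    rw [show M * (M * Dm) = c • (M * Dm) by rw [← Matrix.mul_assoc, hMM, Matrix.smul_mul]] at e3
    rw [hMM] at e3
    -- e3 : c • (M*Dm) + c • (M*Dm) = d c • (c • M) + c • (M * Dm)
    have e4 := add_right_cancel e3
    refine smul_right_injective _ hc ?_
    show c • (M * Dm) = c • (d c • M)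
    rw [e4, smul_comm]
  have step5 : c • Dm = d c • M := by
    rw [step3] at step2
    exact (add_left_cancel step2).symm
  -- the constant projection
  set P : Matrix (Fin n) (Fin n) F := c⁻¹ • M with hP
  have hMP : M = c • P := by
    rw [hP, smul_smul, mul_inv_cancel₀ hc, one_smul]
  have hPP : P * P = P := by
    have h1 : P * P = (c⁻¹ * c⁻¹ * c) • M := by
      rw [hP, Matrix.smul_mul, Matrix.mul_smul, hMM, smul_smul, smul_smul]
    rw [h1, mul_assoc, inv_mul_cancel₀ hc, mul_one, hP]
  have hdcinv : d c⁻¹ = -(c⁻¹ * c⁻¹ * d c) := by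
    have h := hd.2 c c⁻¹
    rw [mul_inv_cancel₀ hc, hd1] at h
    have h2 : c * d c⁻¹ = -(d c * c⁻¹) := eq_neg_of_add_eq_zero_right h.symm
    have h3 : d c⁻¹ = c⁻¹ * (c * d c⁻¹) := by
      rw [← mul_assoc, inv_mul_cancel₀ hc, one_mul]
    rw [h3, h2]
    ring
  have hPd : ∀ p q, d (P p q) = 0 := by
    intro p q
    have hDmpq : c * Dm p q = d c * M p q := by
      have := congrArg (fun X : Matrix (Fin n) (Fin n) F => X p q) step5
      simpa [Matrix.smul_apply, smul_eq_mul] using this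
    have : d (P p q) = d c⁻¹ * M p q + c⁻¹ * Dm p q := by
      simp only [hP, Matrix.smul_apply, smul_eq_mul]
      rw [hd.2 c⁻¹ (M p q)]
      rfl
    have hDmval : Dm p q = c⁻¹ * (d c * M p q) := by
      rw [← hDmpq, ← mul_assoc, inv_mul_cancel₀ hc, one_mul]
    rw [this, hdcinv, hDmval]
    ring
  constructor
  · -- diagonalizability
    set f := M.mulVecLin with hf
    set g := P.mulVecLin with hg
    have hfg : f = c • g := by
      rw [hf, hg, hMP, ← Matrix.toLin'_apply', ← Matrix.toLin'_apply', map_smul]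
    have hgg : g ∘ₗ g = g := by
      rw [hg, ← Matrix.mulVecLin_mul, hPP]
    obtain ⟨p, hp⟩ := (LinearMap.isProj_iff_isIdempotentElem g).mpr hgg
    have hcompl : IsCompl p (LinearMap.ker g) := hp.isCompl
    have hn : Module.finrank F p + Module.finrank F (LinearMap.ker g) = n := by
      rw [Submodule.finrank_add_eq_of_isCompl hcompl, Module.finrank_pi]
      simp
    set bp := Module.finBasis F p
    set bk := Module.finBasis F (LinearMap.ker g)
    set e : (Fin (Module.finrank F p) ⊕ Fin (Module.finrank F (LinearMap.ker g))) ≃ Fin n :=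
      finSumFinEquiv.trans (finCongr hn) with he
    set B := ((bp.prod bk).map (Submodule.prodEquivOfIsCompl p (LinearMap.ker g) hcompl)).reindex e
      with hB
    set μ : Fin n → F := fun i => Sum.elim (fun _ => c) (fun _ => (0 : F)) (e.symm i) with hμ
    have heig : ∀ i, f (B i) = μ i • B i := by
      intro i
      rw [hB, Module.Basis.reindex_apply]
      rcases hs : e.symm i with a | a
      · have hmem : (((bp.prod bk).map
            (Submodule.prodEquivOfIsCompl p (LinearMap.ker g) hcompl)) (Sum.inl a)) ∈ p := by
          rw [Module.Basis.map_apply, Submodule.coe_prodEquivOfIsCompl',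
            Module.Basis.prod_apply_inl_fst, Module.Basis.prod_apply_inl_snd]
          simpa using Submodule.coe_mem (bp a)
        have hμc : μ i = c := by simp only [hμ, hs, Sum.elim_inl]
        rw [hμc, hfg]
        simp only [LinearMap.smul_apply]
        rw [hp.map_id _ hmem]
      · have hmem : (((bp.prod bk).map
            (Submodule.prodEquivOfIsCompl p (LinearMap.ker g) hcompl)) (Sum.inr a))
            ∈ LinearMap.ker g := by
          rw [Module.Basis.map_apply, Submodule.coe_prodEquivOfIsCompl',
            Module.Basis.prod_apply_inr_fst, Module.Basis.prod_apply_inr_snd]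
          simpa using Submodule.coe_mem (bk a)
        have hμ0 : μ i = 0 := by simp only [hμ, hs, Sum.elim_inr]
        rw [hμ0, hfg]
        simp only [LinearMap.smul_apply]
        rw [LinearMap.mem_ker.mp hmem, smul_zero, zero_smul]
    refine ⟨(Pi.basisFun F (Fin n)).toMatrix B, ?_, ?_⟩
    · letI := (Pi.basisFun F (Fin n)).invertibleToMatrix B
      exact isUnit_of_invertible _
    · have hinv : ((Pi.basisFun F (Fin n)).toMatrix B)⁻¹
          = B.toMatrix (Pi.basisFun F (Fin n)) :=
        Matrix.inv_eq_left_inv (Module.Basis.toMatrix_mul_toMatrix_flip _ _)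
      have hMf : LinearMap.toMatrix (Pi.basisFun F (Fin n)) (Pi.basisFun F (Fin n)) f = M := by
        rw [LinearMap.toMatrix_eq_toMatrix', hf, ← Matrix.toLin'_apply',
          LinearMap.toMatrix'_toLin']
      rw [hinv, ← hMf, basis_toMatrix_mul_linearMap_toMatrix_mul_basis_toMatrix]
      intro i j hij
      rw [LinearMap.toMatrix_apply, heig, map_smul]
      simp [Module.Basis.repr_self, Finsupp.single_apply, Ne.symm hij]
  · -- Type 1
    refine ⟨1, fun _ => c, fun _ => P, fun _ => hPd, fun _ _ => rfl, ?_⟩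
    simp [← hMP]
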